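/- Let R be a g×g ribbon matrix, i.e. a matrix over ℚ whose diagonal entries each equal 1/2 or −1/2 and whose off-diagonal entries each lie in {−1, 0, 1}. Then the half Alexander polynomial ρ_R(X) = det((X−1)·R − (1/2)(X+1)·I_g) has integer coefficients, i.e. ρ_R lies in the image of ℤ[X] in ℚ[X]. -/

import Mathlib

open Matrix Polynomial

/-- The half Alexander polynomial `ρ_R(X) = det((X-1)·R - (1/2)(X+1)·I)` of a square
rational matrix `R`. -/
noncomputable def halfAlex {g : ℕ} (R : Matrix (Fin g) (Fin g) ℚ) : Polynomial ℚ :=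
  ((X - 1 : ℚ[X]) • R.map C - (C (1/2 : ℚ) * (X + 1)) • (1 : Matrix (Fin g) (Fin g) ℚ[X])).det

/-- A ribbon matrix: diagonal entries are `±1/2`, off-diagonal entries lie in `{-1, 0, 1}`. -/
def IsRibbonMatrix {g : ℕ} (R : Matrix (Fin g) (Fin g) ℚ) : Prop :=
  (∀ i, R i i = 1/2 ∨ R i i = -(1/2)) ∧
    ∀ i j, i ≠ j → R i j = -1 ∨ R i j = 0 ∨ R i j = 1

/-- the half Alexander polynomial of a ribbon matrix has integer
coefficients, i.e. it lies in the image of `ℤ[X]` in `ℚ[X]`. -/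
theorem halfAlex_mem_image_int {g : ℕ} (R : Matrix (Fin g) (Fin g) ℚ)
    (hR : IsRibbonMatrix R) :
    ∃ p : Polynomial ℤ, p.map (Int.castRingHom ℚ) = halfAlex R := by
  classical
  set M : Matrix (Fin g) (Fin g) (Polynomial ℤ) := fun i j =>
    if i = j then (if R i i = 1/2 then -1 else -X)
    else C (R i j).num * (X - 1) with hM
  refine ⟨M.det, ?_⟩
  have hdet := RingHom.map_det (Polynomial.mapRingHom (Int.castRingHom ℚ)) M
  rw [show (M.det).map (Int.castRingHom ℚ) = (M.map (Polynomial.mapRingHom (Int.castRingHom ℚ))).det from hdet]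
  unfold halfAlex
  congr 1
  refine Matrix.ext fun i j => ?_
  simp only [Matrix.map_apply, Matrix.sub_apply, Matrix.smul_apply, Matrix.one_apply, hM, Matrix.map, Matrix.of_apply,
    smul_eq_mul, RingHom.coe_coe]
  by_cases h : i = j
  · subst h
    simp only [if_pos rfl, eq_self_iff_true, if_true]
    have h2 : (C (1/2 : ℚ)) * 2 = 1 := by
      rw [show (2 : ℚ[X]) = C 2 by norm_cast, ← C_mul]; norm_num
    rcases hR.1 i with h1 | h1
    · rw [if_pos h1, h1, map_neg, _root_.map_one]
      linear_combination h2
    · have hne : R i i ≠ 1/2 := by rw [h1]; norm_num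
      rw [if_neg hne, h1, map_neg, coe_mapRingHom, Polynomial.map_X, C_neg]
      linear_combination X * h2
  · simp only [if_neg h, coe_mapRingHom, Polynomial.map_mul, Polynomial.map_sub,
      Polynomial.map_X, Polynomial.map_one, map_C]
    rcases hR.2 i j h with h1 | h1 | h1 <;> rw [h1] <;> norm_num
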